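/- For the complete elliptic integrals K(k) and E(k), with k' = √(1-k²), and all k ∈ (0,1): (1 + k'²) K(k) - 2 E(k) > 0. -/
import Mathlib

open Real intervalIntegral

/-- The complete elliptic integral of the first kind. -/
noncomputable def Kell (k : ℝ) : ℝ :=
  ∫ θ in (0:ℝ)..(Real.pi/2), 1 / Real.sqrt (1 - k^2 * Real.sin θ ^ 2)

/-- The complete elliptic integral of the second kind. -/
noncomputable def Eell (k : ℝ) : ℝ :=
  ∫ θ in (0:ℝ)..(Real.pi/2), Real.sqrt (1 - k^2 * Real.sin θ ^ 2)


private lemma pair_pos (k θ : ℝ) (hk0 : 0 < k) (hk1 : k < 1)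
    (hθ0 : 0 < θ) (hθ4 : θ < Real.pi / 4) :
    0 < k ^ 2 * (2 * Real.sin θ ^ 2 - 1) / Real.sqrt (1 - k ^ 2 * Real.sin θ ^ 2)
      + k ^ 2 * (2 * Real.sin (Real.pi / 2 - θ) ^ 2 - 1) /
        Real.sqrt (1 - k ^ 2 * Real.sin (Real.pi / 2 - θ) ^ 2) := by
  have hpi := Real.pi_pos
  rw [Real.sin_pi_div_two_sub]
  have hsinpos : 0 < Real.sin θ := Real.sin_pos_of_pos_of_lt_pi hθ0 (by nlinarith)
  have hsc : Real.sin θ < Real.cos θ := by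
    rw [← Real.sin_pi_div_two_sub θ]
    exact Real.sin_lt_sin_of_lt_of_le_pi_div_two (by nlinarith) (by nlinarith) (by nlinarith)
  have hcospos : 0 < Real.cos θ := lt_trans hsinpos hsc
  have hsq : Real.sin θ ^ 2 < Real.cos θ ^ 2 := by nlinarith
  have hpyth := Real.sin_sq_add_cos_sq θ
  have hkk : 0 < k ^ 2 := by positivity
  have hB : 0 < Real.sqrt (1 - k ^ 2 * Real.cos θ ^ 2) := by
    apply Real.sqrt_pos.mpr
    nlinarith [Real.cos_sq_le_one θ]
  have hA : 0 < Real.sqrt (1 - k ^ 2 * Real.sin θ ^ 2) := by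
    apply Real.sqrt_pos.mpr
    nlinarith [Real.sin_sq_le_one θ]
  have hBA : Real.sqrt (1 - k ^ 2 * Real.cos θ ^ 2) < Real.sqrt (1 - k ^ 2 * Real.sin θ ^ 2) := by
    apply Real.sqrt_lt_sqrt (by nlinarith [Real.cos_sq_le_one θ])
      (by nlinarith [mul_lt_mul_of_pos_left hsq hkk])
  have hinv : 1 / Real.sqrt (1 - k ^ 2 * Real.sin θ ^ 2)
      < 1 / Real.sqrt (1 - k ^ 2 * Real.cos θ ^ 2) := one_div_lt_one_div_of_lt hB hBA
  have ht : 0 < 1 - 2 * Real.sin θ ^ 2 := by nlinarith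
  have h2c : 2 * Real.cos θ ^ 2 - 1 = 1 - 2 * Real.sin θ ^ 2 := by nlinarith
  set t : ℝ := 1 - 2 * Real.sin θ ^ 2 with hts
  set A : ℝ := Real.sqrt (1 - k ^ 2 * Real.sin θ ^ 2) with hAs
  set B : ℝ := Real.sqrt (1 - k ^ 2 * Real.cos θ ^ 2) with hBs
  have h2s : 2 * Real.sin θ ^ 2 - 1 = -t := by rw [hts]; ring
  rw [h2s, h2c]
  clear_value t A B
  have heq : k ^ 2 * (-t) / A + k ^ 2 * t / B = k ^ 2 * t * (1 / B - 1 / A) := by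
    field_simp
    ring
  rw [heq]
  exact mul_pos (mul_pos hkk ht) (sub_pos.mpr hinv)

/-- (1 + k'²) K(k) - 2E(k) > 0 for k ∈ (0,1). -/
theorem one_add_kp_sq_K_sub_two_E_pos : ∀ k ∈ Set.Ioo (0:ℝ) 1, (1 + (1 - k^2)) * Kell k - 2 * Eell k > 0 := by
  rintro k ⟨hk0, hk1⟩
  have hk2 : 0 < 1 - k ^ 2 := by nlinarith
  have hsp : ∀ θ : ℝ, 0 < 1 - k ^ 2 * Real.sin θ ^ 2 := by
    intro θ
    nlinarith [Real.sin_sq_le_one θ, sq_nonneg (Real.sin θ), sq_nonneg k]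
  have hsqp : ∀ θ : ℝ, 0 < Real.sqrt (1 - k ^ 2 * Real.sin θ ^ 2) :=
    fun θ => Real.sqrt_pos.mpr (hsp θ)
  set h : ℝ → ℝ := fun θ => k ^ 2 * (2 * Real.sin θ ^ 2 - 1) / Real.sqrt (1 - k ^ 2 * Real.sin θ ^ 2) with hh
  have hconts : Continuous fun θ : ℝ => Real.sqrt (1 - k ^ 2 * Real.sin θ ^ 2) := by
    fun_prop
  have hcont1 : Continuous fun θ : ℝ => 1 / Real.sqrt (1 - k ^ 2 * Real.sin θ ^ 2) :=
    Continuous.div continuous_const hconts (fun θ => (hsqp θ).ne')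
  have hconth : Continuous h :=
    Continuous.div (by fun_prop) hconts (fun θ => (hsqp θ).ne')
  have i1 : IntervalIntegrable (fun θ : ℝ => (1 + (1 - k ^ 2)) * (1 / Real.sqrt (1 - k ^ 2 * Real.sin θ ^ 2))) MeasureTheory.volume 0 (Real.pi / 2) :=
    (continuous_const.mul hcont1).intervalIntegrable _ _
  have i2 : IntervalIntegrable (fun θ : ℝ => 2 * Real.sqrt (1 - k ^ 2 * Real.sin θ ^ 2)) MeasureTheory.volume 0 (Real.pi / 2) :=
    (continuous_const.mul hconts).intervalIntegrable _ _
  have key : (1 + (1 - k ^ 2)) * Kell k - 2 * Eell k = ∫ θ in (0:ℝ)..(Real.pi/2), h θ := by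
    unfold Kell Eell
    rw [← intervalIntegral.integral_const_mul, ← intervalIntegral.integral_const_mul,
      ← intervalIntegral.integral_sub i1 i2]
    apply intervalIntegral.integral_congr
    intro θ _
    have hA := hsqp θ
    have hA2 : Real.sqrt (1 - k ^ 2 * Real.sin θ ^ 2) * Real.sqrt (1 - k ^ 2 * Real.sin θ ^ 2)
        = 1 - k ^ 2 * Real.sin θ ^ 2 := Real.mul_self_sqrt (hsp θ).le
    simp only [hh]
    field_simp
    nlinarith [hA2]
  rw [key]
  have hsplit : (∫ θ in (0:ℝ)..(Real.pi/2), h θ)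
      = (∫ θ in (0:ℝ)..(Real.pi/4), h θ) + ∫ θ in (Real.pi/4:ℝ)..(Real.pi/2), h θ :=
    (intervalIntegral.integral_add_adjacent_intervals
      (hconth.intervalIntegrable _ _) (hconth.intervalIntegrable _ _)).symm
  have hrefl : (∫ θ in (Real.pi/4:ℝ)..(Real.pi/2), h θ)
      = ∫ θ in (0:ℝ)..(Real.pi/4), h (Real.pi / 2 - θ) := by
    rw [intervalIntegral.integral_comp_sub_left h (Real.pi / 2)]
    norm_num
    ring_nf
  rw [hsplit, hrefl]
  have i3 : IntervalIntegrable h MeasureTheory.volume 0 (Real.pi/4) :=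
    hconth.intervalIntegrable _ _
  have i4 : IntervalIntegrable (fun θ : ℝ => h (Real.pi / 2 - θ)) MeasureTheory.volume 0 (Real.pi/4) :=
    (hconth.comp (continuous_const.sub continuous_id)).intervalIntegrable _ _
  rw [← intervalIntegral.integral_add i3 i4]
  apply intervalIntegral.intervalIntegral_pos_of_pos_on (i3.add i4)
  · intro θ hθ
    exact pair_pos k θ hk0 hk1 hθ.1 hθ.2
  · nlinarith [Real.pi_pos]
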